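/- Let g be a real compact semisimple Lie algebra (the Lie algebra of a compact semisimple Lie group). Then there exist Y_1, Y_2 ∈ g such that ad_{Y_1}(g) + ad_{Y_2}(g) = g; i.e. N_g ≤ 2. -/

import Mathlib

open Module LinearMap Submodule
open scoped RealInnerProductSpace

universe v w

section Skew

variable {V : Type*} [NormedAddCommGroup V] [InnerProductSpace ℝ V]

/-- For a skew-adjoint operator, the orthogonal complement of the range is the kernel. -/
lemma skew_orthogonal_range (A : Module.End ℝ V)
    (hA : ∀ x y : V, ⟪A x, y⟫ = -⟪x, A y⟫) :
    (LinearMap.range A)ᗮ = LinearMap.ker A := by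
  ext x
  simp only [Submodule.mem_orthogonal, LinearMap.mem_ker, LinearMap.mem_range]
  constructor
  · intro h
    have h' : ∀ y : V, ⟪y, A x⟫ = 0 := by
      intro y
      have := h (A y) ⟨y, rfl⟩
      rw [hA y x] at this
      linarith
    have := h' (A x)
    rwa [inner_self_eq_zero] at this
  · rintro h u ⟨y, rfl⟩
    rw [hA y x, h, inner_zero_right, neg_zero]

/-- A skew-adjoint operator preserving a subspace preserves its orthogonal complement. -/
lemma skew_invariant_orthogonal (A : Module.End ℝ V)
    (hA : ∀ x y : V, ⟪A x, y⟫ = -⟪x, A y⟫) (E : Submodule ℝ V)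
    (hE : ∀ x ∈ E, A x ∈ E) : ∀ x ∈ Eᗮ, A x ∈ Eᗮ := by
  intro x hx
  rw [Submodule.mem_orthogonal] at hx ⊢
  intro u hu
  have := hA u x
  rw [hx (A u) (hE u hu)] at this
  linarith

/-- Kernel of an operator splits along an invariant orthogonal decomposition. -/
lemma ker_split [FiniteDimensional ℝ V] (A : Module.End ℝ V) (E : Submodule ℝ V)
    (hE : ∀ x ∈ E, A x ∈ E) (hE' : ∀ x ∈ Eᗮ, A x ∈ Eᗮ) :
    LinearMap.ker A =
      (LinearMap.ker (A.restrict hE)).map E.subtype ⊔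
        (LinearMap.ker (A.restrict hE')).map Eᗮ.subtype := by
  apply le_antisymm
  · intro x hx
    rw [LinearMap.mem_ker] at hx
    have htop : E ⊔ Eᗮ = ⊤ := Submodule.sup_orthogonal_of_hasOrthogonalProjection
    have hx' : x ∈ E ⊔ Eᗮ := by rw [htop]; exact Submodule.mem_top
    obtain ⟨e, he, f, hf, hef⟩ := Submodule.mem_sup.mp hx'
    have hsum : A e + A f = 0 := by rw [← map_add, hef, hx]
    have hAe : A e ∈ E ⊓ Eᗮ := by
      constructor
      · exact hE e he
      · have : A e = -A f := eq_neg_of_add_eq_zero_left hsum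
        rw [this]
        exact Submodule.neg_mem _ (hE' f hf)
    rw [Submodule.inf_orthogonal_eq_bot, Submodule.mem_bot] at hAe
    have hAf : A f = 0 := by rwa [hAe, zero_add] at hsum
    rw [← hef]
    apply Submodule.add_mem_sup
    · exact ⟨⟨e, he⟩, Subtype.ext hAe, rfl⟩
    · exact ⟨⟨f, hf⟩, Subtype.ext hAf, rfl⟩
  · apply sup_le
    · rintro x ⟨⟨y, hy⟩, hky, rfl⟩
      have : A y = 0 := congrArg Subtype.val hky
      exact this
    · rintro x ⟨⟨y, hy⟩, hky, rfl⟩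
      have : A y = 0 := congrArg Subtype.val hky
      exact this

/-- Pencil lemma: for commuting skew-adjoint operators `A`, `B`, there is `t ≠ 0` with
`ker (A + t • B) ≤ ker A ⊓ ker B`. -/
lemma pencil [FiniteDimensional ℝ V] (A B : Module.End ℝ V)
    (hA : ∀ x y : V, ⟪A x, y⟫ = -⟪x, A y⟫) (hB : ∀ x y : V, ⟪B x, y⟫ = -⟪x, B y⟫)
    (hAB : A * B = B * A) :
    ∃ t : ℝ, t ≠ 0 ∧ LinearMap.ker (A + t • B) ≤ LinearMap.ker A ⊓ LinearMap.ker B := by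
  set W : Submodule ℝ V := LinearMap.ker A with hW
  have hAW : ∀ x ∈ W, A x ∈ W := by
    intro x hx; rw [LinearMap.mem_ker] at hx; simp [hW, hx]
  have hBW : ∀ x ∈ W, B x ∈ W := by
    intro x hx
    rw [hW, LinearMap.mem_ker] at hx ⊢
    have : (A * B) x = (B * A) x := by rw [hAB]
    simpa [Module.End.mul_apply, hx] using this
  have hAU : ∀ x ∈ Wᗮ, A x ∈ Wᗮ := skew_invariant_orthogonal A hA W hAW
  have hBU : ∀ x ∈ Wᗮ, B x ∈ Wᗮ := skew_invariant_orthogonal B hB W hBW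
  set A' : Module.End ℝ Wᗮ := A.restrict hAU with hA'
  set B' : Module.End ℝ Wᗮ := B.restrict hBU with hB'
  have hA'ker : LinearMap.ker A' = ⊥ := by
    rw [LinearMap.ker_eq_bot']
    intro m hm
    have h1 : A (m : V) = 0 := congrArg Subtype.val hm
    have h2 : (m : V) ∈ W ⊓ Wᗮ := ⟨h1, m.2⟩
    rw [Submodule.inf_orthogonal_eq_bot, Submodule.mem_bot] at h2
    exact Subtype.ext h2
  have hA'det : LinearMap.det A' ≠ 0 := by
    intro h
    have := LinearMap.bot_lt_ker_of_det_eq_zero h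
    rw [hA'ker] at this
    exact lt_irrefl _ this
  -- determinant of the pencil, via matrices
  set b := Module.finBasis ℝ (↥(Wᗮ)) with hb
  set M := LinearMap.toMatrix b b A' with hM
  set N := LinearMap.toMatrix b b B' with hN
  have hcont : Continuous fun t : ℝ => (M + t • N).det := by
    apply Continuous.matrix_det
    exact continuous_const.add (continuous_id.smul continuous_const)
  have hf0 : (M + (0 : ℝ) • N).det ≠ 0 := by
    rw [zero_smul, add_zero, hM, LinearMap.det_toMatrix]
    exact hA'det
  have hev : ∀ᶠ t in nhds (0 : ℝ), (M + t • N).det ≠ 0 :=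
    (hcont.continuousAt).eventually_ne hf0
  have hexists : ∃ t : ℝ, t ≠ 0 ∧ (M + t • N).det ≠ 0 := by
    obtain ⟨ε, hε, hball⟩ := Metric.eventually_nhds_iff.mp hev
    refine ⟨ε / 2, by positivity, ?_⟩
    apply hball
    rw [Real.dist_eq, sub_zero, abs_of_pos (by positivity : (0:ℝ) < ε / 2)]
    linarith
  obtain ⟨t, htne, htdet⟩ := hexists
  refine ⟨t, htne, ?_⟩
  -- the restricted pencil is injective
  have hrestr : ∀ x ∈ Wᗮ, (A + t • B) x ∈ Wᗮ := by
    intro x hx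
    have := Submodule.add_mem Wᗮ (hAU x hx) (Submodule.smul_mem Wᗮ t (hBU x hx))
    simpa using this
  have hrestr_eq : (A + t • B).restrict hrestr = A' + t • B' := by
    ext x
    simp [hA', hB', LinearMap.restrict_apply]
  have hdet' : LinearMap.det ((A + t • B).restrict hrestr) ≠ 0 := by
    rw [hrestr_eq]
    have : LinearMap.toMatrix b b (A' + t • B') = M + t • N := by
      rw [map_add, map_smul, hM, hN]
    rw [← LinearMap.det_toMatrix b, this]
    exact htdet
  have hinj : LinearMap.ker ((A + t • B).restrict hrestr) = ⊥ := by
    apply LinearMap.ker_eq_bot.mpr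
    exact fun a b h => (LinearMap.equivOfDetNeZero _ hdet').injective h
  -- now split an arbitrary kernel element
  intro x hx
  rw [LinearMap.mem_ker] at hx
  have htop : W ⊔ Wᗮ = ⊤ := Submodule.sup_orthogonal_of_hasOrthogonalProjection
  have hx' : x ∈ W ⊔ Wᗮ := by rw [htop]; exact Submodule.mem_top
  obtain ⟨w, hw, u, hu, hwu⟩ := Submodule.mem_sup.mp hx'
  have hAw : A w = 0 := hw
  have h1 : t • B w + (A + t • B) u = 0 := by
    have h : (A + t • B) w + (A + t • B) u = 0 := by rw [← map_add, hwu]; exact hx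
    rwa [LinearMap.add_apply, LinearMap.smul_apply, hAw, zero_add] at h
  have htBw : t • B w ∈ W := Submodule.smul_mem W t (hBW w hw)
  have hABu : (A + t • B) u ∈ Wᗮ := hrestr u hu
  have htBw0 : t • B w ∈ W ⊓ Wᗮ := by
    refine ⟨htBw, ?_⟩
    have : t • B w = -((A + t • B) u) := eq_neg_of_add_eq_zero_left h1
    rw [this]
    exact Submodule.neg_mem _ hABu
  rw [Submodule.inf_orthogonal_eq_bot, Submodule.mem_bot] at htBw0
  have hBw : B w = 0 := by
    have := smul_eq_zero.mp htBw0
    tauto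
  have hu0 : u = 0 := by
    have hker : (⟨u, hu⟩ : ↥(Wᗮ)) ∈ LinearMap.ker ((A + t • B).restrict hrestr) := by
      rw [LinearMap.mem_ker]
      apply Subtype.ext
      have h2 : (A + t • B) u = 0 := by rwa [htBw0, zero_add] at h1
      simpa [LinearMap.restrict_apply] using h2
    rw [hinj, Submodule.mem_bot] at hker
    exact congrArg Subtype.val hker
  have hxw : x = w := by rw [← hwu, hu0, add_zero]
  subst hxw
  exact ⟨hAw, hBw⟩

end Skew

/-- A commuting family of skew-adjoint operators on a finite-dimensional real inner product
space has only finitely many kernels. -/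
theorem finite_kernels : ∀ (n : ℕ) (V : Type v) [NormedAddCommGroup V] [InnerProductSpace ℝ V]
    [FiniteDimensional ℝ V], finrank ℝ V ≤ n → ∀ {ι : Type w} (A : ι → Module.End ℝ V),
    (∀ i, ∀ x y : V, ⟪A i x, y⟫ = -⟪x, A i y⟫) → (∀ i j, A i * A j = A j * A i) →
    (Set.range fun i => LinearMap.ker (A i)).Finite := by
  intro n
  induction n with
  | zero =>
    intro V _ _ _ hrank ι A _ _
    have : Subsingleton V := by
      rw [← Module.finrank_zero_iff (R := ℝ)]
      omega
    have : ∀ i, LinearMap.ker (A i) = ⊤ := by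
      intro i
      ext x
      simp [Subsingleton.elim (A i x) 0]
    apply Set.Finite.subset (Set.finite_singleton ⊤)
    rintro K ⟨i, rfl⟩
    simp [this i]
  | succ n ih =>
    intro V _ _ _ hrank ι A hskew hcomm
    by_cases hsc : ∀ i, ∃ c : ℝ, A i * A i = c • (1 : Module.End ℝ V)
    · -- every square is scalar: kernels are ⊥ or ⊤
      apply Set.Finite.subset ((Set.finite_singleton (⊤ : Submodule ℝ V)).insert ⊥)
      rintro K ⟨i, rfl⟩
      simp only [Set.mem_insert_iff, Set.mem_singleton_iff]
      obtain ⟨c, hc⟩ := hsc i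
      by_cases hc0 : c = 0
      · right
        ext x
        simp only [LinearMap.mem_ker, Submodule.mem_top, iff_true]
        have h2 : A i (A i x) = 0 := by
          have : (A i * A i) x = (c • (1 : Module.End ℝ V)) x := by rw [hc]
          simpa [hc0, Module.End.mul_apply] using this
        have : ⟪A i x, A i x⟫ = 0 := by
          rw [hskew i x (A i x), h2, inner_zero_right, neg_zero]
        rwa [inner_self_eq_zero] at this
      · left
        ext x
        simp only [LinearMap.mem_ker, Submodule.mem_bot]
        constructor
        · intro hx
          have : (A i * A i) x = c • x := by
            rw [hc]; simp
          rw [Module.End.mul_apply, hx, map_zero] at this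
          have := this.symm
          rwa [smul_eq_zero_iff_right hc0] at this
        · intro hx; rw [hx, map_zero]
    · push_neg at hsc
      obtain ⟨i₀, hi₀⟩ := hsc
      set S : Module.End ℝ V := A i₀ * A i₀ with hS
      have hSsym : LinearMap.IsSymmetric S := by
        intro x y
        have h1 := hskew i₀ (A i₀ x) y
        have h2 := hskew i₀ x (A i₀ y)
        simp only [hS, Module.End.mul_apply]
        linarith
      -- find a nontrivial proper eigenspace
      have htot : (⨆ μ : ℝ, Module.End.eigenspace S μ) = ⊤ := by
        have := hSsym.orthogonalComplement_iSup_eigenspaces_eq_bot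
        rwa [Submodule.orthogonal_eq_bot_iff] at this
      have hex : ∃ μ : ℝ, Module.End.eigenspace S μ ≠ ⊥ ∧ Module.End.eigenspace S μ ≠ ⊤ := by
        by_contra h
        push_neg at h
        by_cases htop : ∃ μ : ℝ, Module.End.eigenspace S μ = ⊤
        · obtain ⟨μ, hμ⟩ := htop
          apply hi₀ μ
          ext x
          have hx : x ∈ Module.End.eigenspace S μ := by rw [hμ]; exact Submodule.mem_top
          rw [Module.End.mem_eigenspace_iff] at hx
          simpa using hx
        · push_neg at htop
          have hall : ∀ μ : ℝ, Module.End.eigenspace S μ = ⊥ := by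
            intro μ
            by_contra hμ
            exact htop μ (h μ hμ)
          rw [iSup_congr hall, iSup_const] at htot
          apply hi₀ 0
          ext x
          have : x ∈ (⊥ : Submodule ℝ V) := by rw [htot]; exact Submodule.mem_top
          rw [Submodule.mem_bot] at this
          simp [this]
      obtain ⟨μ₀, hEbot, hEtop⟩ := hex
      set E : Submodule ℝ V := Module.End.eigenspace S μ₀ with hE
      have hSA : ∀ j, S * A j = A j * S := by
        intro j
        rw [hS, mul_assoc, hcomm i₀ j, ← mul_assoc, hcomm i₀ j, mul_assoc]
      have hEinv : ∀ j, ∀ x ∈ E, A j x ∈ E := by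
        intro j x hx
        rw [hE, Module.End.mem_eigenspace_iff] at hx ⊢
        have : S (A j x) = A j (S x) := by
          have := congrArg (fun f : Module.End ℝ V => f x) (hSA j)
          simpa [Module.End.mul_apply] using this
        rw [this, hx, map_smul]
      have hE'inv : ∀ j, ∀ x ∈ Eᗮ, A j x ∈ Eᗮ := fun j =>
        skew_invariant_orthogonal (A j) (hskew j) E (hEinv j)
      -- restricted families
      set A₁ : ι → Module.End ℝ ↥E := fun j => (A j).restrict (hEinv j) with hA₁
      set A₂ : ι → Module.End ℝ ↥(Eᗮ) := fun j => (A j).restrict (hE'inv j) with hA₂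
      have hr₁ : finrank ℝ ↥E ≤ n := by
        have : finrank ℝ ↥E < finrank ℝ V := Submodule.finrank_lt hEtop
        omega
      have hr₂ : finrank ℝ ↥(Eᗮ) ≤ n := by
        have hne : Eᗮ ≠ ⊤ := by
          intro h
          apply hEbot
          have := Submodule.inf_orthogonal_eq_bot E
          rw [h, inf_top_eq] at this
          exact this
        have : finrank ℝ ↥(Eᗮ) < finrank ℝ V := Submodule.finrank_lt hne
        omega
      have hskew₁ : ∀ j, ∀ x y : ↥E, ⟪A₁ j x, y⟫ = -⟪x, A₁ j y⟫ := by
        intro j x y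
        rw [hA₁]
        simp only [Submodule.coe_inner, LinearMap.restrict_coe_apply]
        exact hskew j x y
      have hskew₂ : ∀ j, ∀ x y : ↥(Eᗮ), ⟪A₂ j x, y⟫ = -⟪x, A₂ j y⟫ := by
        intro j x y
        rw [hA₂]
        simp only [Submodule.coe_inner, LinearMap.restrict_coe_apply]
        exact hskew j x y
      have hcomm₁ : ∀ j k, A₁ j * A₁ k = A₁ k * A₁ j := by
        intro j k
        ext x
        simp only [hA₁, Module.End.mul_apply, LinearMap.restrict_coe_apply]
        have := congrArg (fun f : Module.End ℝ V => f (x : V)) (hcomm j k)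
        simpa [Module.End.mul_apply] using this
      have hcomm₂ : ∀ j k, A₂ j * A₂ k = A₂ k * A₂ j := by
        intro j k
        ext x
        simp only [hA₂, Module.End.mul_apply, LinearMap.restrict_coe_apply]
        have := congrArg (fun f : Module.End ℝ V => f (x : V)) (hcomm j k)
        simpa [Module.End.mul_apply] using this
      have hfin₁ := ih ↥E hr₁ A₁ hskew₁ hcomm₁
      have hfin₂ := ih ↥(Eᗮ) hr₂ A₂ hskew₂ hcomm₂
      have hsplit : ∀ j, LinearMap.ker (A j) =
          (LinearMap.ker (A₁ j)).map E.subtype ⊔ (LinearMap.ker (A₂ j)).map Eᗮ.subtype :=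
        fun j => ker_split (A j) E (hEinv j) (hE'inv j)
      apply Set.Finite.subset (Set.Finite.image2
        (fun p q => Submodule.map E.subtype p ⊔ Submodule.map Eᗮ.subtype q) hfin₁ hfin₂)
      rintro K ⟨j, rfl⟩
      exact ⟨LinearMap.ker (A₁ j), ⟨j, rfl⟩, LinearMap.ker (A₂ j), ⟨j, rfl⟩, (hsplit j).symm⟩

/-- Let `g` be a real compact semisimple Lie algebra (semisimple with negative definite
Killing form).  Then there exist `Y₁, Y₂ ∈ g` with `ad_{Y₁}(g) + ad_{Y₂}(g) = g`;
i.e. `N_g ≤ 2`. -/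
theorem stmt_14 (g : Type*) [LieRing g] [LieAlgebra ℝ g] [FiniteDimensional ℝ g]
    [LieAlgebra.IsSemisimple ℝ g]
    (hcompact : ∀ x : g, x ≠ 0 → killingForm ℝ g x x < 0) :
    ∃ Y₁ Y₂ : g,
      LinearMap.range (LieAlgebra.ad ℝ g Y₁) ⊔ LinearMap.range (LieAlgebra.ad ℝ g Y₂) = ⊤ := by
  classical
  -- endow `g` with the inner product `⟪x, y⟫ = -κ(x, y)`
  letI core : InnerProductSpace.Core ℝ g :=
    { inner := fun x y => -(killingForm ℝ g x y)
      conj_inner_symm := by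
        intro x y
        simp only [starRingEnd_apply, star_trivial]
        rw [LieModule.traceForm_comm]
      re_inner_nonneg := by
        intro x
        simp only [RCLike.re_to_real]
        by_cases hx : x = 0
        · simp [hx]
        · have := hcompact x hx
          linarith
      definite := by
        intro x h
        by_contra hx
        have := hcompact x hx
        change -(killingForm ℝ g x x) = 0 at h
        linarith
      add_left := by
        intro x y z
        simp only [map_add, LinearMap.add_apply]
        ring
      smul_left := by
        intro x y r
        simp only [map_smul, LinearMap.smul_apply, starRingEnd_apply, star_trivial,
          smul_eq_mul]
        ring }
  letI : NormedAddCommGroup g := core.toNormedAddCommGroup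
  letI : InnerProductSpace ℝ g := InnerProductSpace.ofCore core.toCore
  have hinner : ∀ x y : g, ⟪x, y⟫ = -(killingForm ℝ g x y) := fun _ _ => rfl
  -- `ad Y` is skew-adjoint
  have hskew : ∀ Y x y : g, ⟪LieAlgebra.ad ℝ g Y x, y⟫ = -⟪x, LieAlgebra.ad ℝ g Y y⟫ := by
    intro Y x y
    rw [hinner, hinner, LieAlgebra.ad_apply, LieAlgebra.ad_apply]
    have h := LieModule.traceForm_apply_lie_apply' ℝ g g Y x y
    have h' : killingForm ℝ g ⁅Y, x⁆ y = -(killingForm ℝ g x ⁅Y, y⁆) := h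
    rw [h']
  -- commuting elements have commuting adjoints
  have hcommute : ∀ Y Z : g, ⁅Y, Z⁆ = 0 →
      LieAlgebra.ad ℝ g Y * LieAlgebra.ad ℝ g Z = LieAlgebra.ad ℝ g Z * LieAlgebra.ad ℝ g Y := by
    intro Y Z h
    letI : LieRing (Module.End ℝ g) := LieRing.ofAssociativeRing
    have h1 : LieAlgebra.ad ℝ g ⁅Y, Z⁆ = ⁅LieAlgebra.ad ℝ g Y, LieAlgebra.ad ℝ g Z⁆ :=
      LieHom.map_lie _ _ _
    rw [h, map_zero, Ring.lie_def] at h1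
    have h2 := sub_eq_zero.mp h1.symm
    exact h2
  -- choose `Y₁` with centralizer of minimal dimension
  obtain ⟨Y₁, hY₁min⟩ : ∃ Y₁ : g, ∀ Y : g,
      finrank ℝ (LinearMap.ker (LieAlgebra.ad ℝ g Y₁)) ≤
        finrank ℝ (LinearMap.ker (LieAlgebra.ad ℝ g Y)) := by
    have hs : (Set.range fun Y : g =>
        finrank ℝ (LinearMap.ker (LieAlgebra.ad ℝ g Y))).Nonempty := ⟨_, ⟨0, rfl⟩⟩
    obtain ⟨Y₁, hY₁⟩ := Nat.sInf_mem hs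
    have hY₁' : finrank ℝ (LinearMap.ker (LieAlgebra.ad ℝ g Y₁)) = _ := hY₁
    exact ⟨Y₁, fun Y => le_trans (le_of_eq hY₁') (Nat.sInf_le ⟨Y, rfl⟩)⟩
  set H : Submodule ℝ g := LinearMap.ker (LieAlgebra.ad ℝ g Y₁) with hH
  -- the centralizer `H` of `Y₁` centralizes itself
  have key : ∀ Z ∈ H, H ≤ LinearMap.ker (LieAlgebra.ad ℝ g Z) := by
    intro Z hZ
    have hYZ : ⁅Y₁, Z⁆ = 0 := by
      rw [hH, LinearMap.mem_ker, LieAlgebra.ad_apply] at hZ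
      exact hZ
    obtain ⟨t, ht0, hker⟩ := pencil (LieAlgebra.ad ℝ g Y₁) (LieAlgebra.ad ℝ g Z)
      (hskew Y₁) (hskew Z) (hcommute Y₁ Z hYZ)
    have had : LieAlgebra.ad ℝ g (Y₁ + t • Z) =
        LieAlgebra.ad ℝ g Y₁ + t • LieAlgebra.ad ℝ g Z := by
      rw [map_add, map_smul]
    have hmin := hY₁min (Y₁ + t • Z)
    rw [had] at hmin
    have h4 : finrank ℝ (LinearMap.ker (LieAlgebra.ad ℝ g Y₁ + t • LieAlgebra.ad ℝ g Z)) ≤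
        finrank ℝ ((H ⊓ LinearMap.ker (LieAlgebra.ad ℝ g Z)) : Submodule ℝ g) :=
      Submodule.finrank_mono hker
    have h2 : finrank ℝ ((H ⊓ LinearMap.ker (LieAlgebra.ad ℝ g Z)) : Submodule ℝ g) ≤
        finrank ℝ H := Submodule.finrank_mono inf_le_left
    have heq : H ⊓ LinearMap.ker (LieAlgebra.ad ℝ g Z) = H :=
      Submodule.eq_of_le_of_finrank_le inf_le_left (by omega)
    exact inf_eq_left.mp heq
  -- the kernels of `ad Z`, `Z ∈ H`, form a finite family
  have habH : ∀ Z W : ↥H, LieAlgebra.ad ℝ g (Z : g) * LieAlgebra.ad ℝ g (W : g) =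
      LieAlgebra.ad ℝ g (W : g) * LieAlgebra.ad ℝ g (Z : g) := by
    intro Z W
    apply hcommute
    have hW := key (Z : g) Z.2 W.2
    rwa [LinearMap.mem_ker, LieAlgebra.ad_apply] at hW
  have hfin := finite_kernels (finrank ℝ g) g le_rfl
    (fun Z : ↥H => LieAlgebra.ad ℝ g (Z : g)) (fun Z => hskew (Z : g)) habH
  -- choose `Y₂` avoiding the finitely many proper subspaces `ker (ad Z)`, `0 ≠ Z ∈ H`
  set T : Finset (Submodule ℝ g) := hfin.toFinset.erase ⊤ with hT
  have htopT : ⊤ ∉ T := Finset.notMem_erase _ _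
  have hcover := Subspace.biUnion_ne_univ_of_top_notMem (k := ℝ) (E := g) htopT
  obtain ⟨Y₂, hY₂⟩ : ∃ Y₂ : g, ∀ p ∈ T, Y₂ ∉ p := by
    by_contra h
    push_neg at h
    apply hcover
    ext x
    simp only [Set.mem_iUnion, Set.mem_univ, iff_true]
    obtain ⟨p, hp, hxp⟩ := h x
    exact ⟨p, hp, hxp⟩
  refine ⟨Y₁, Y₂, ?_⟩
  -- the two centralizers intersect trivially
  have hker12 : LinearMap.ker (LieAlgebra.ad ℝ g Y₁) ⊓ LinearMap.ker (LieAlgebra.ad ℝ g Y₂)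
      = ⊥ := by
    rw [eq_bot_iff]
    rintro x ⟨hx1, hx2⟩
    rw [Submodule.mem_bot]
    by_contra hx0
    -- `Y₂` lies in `ker (ad x)`, which is a proper member of `T`
    have hYK : Y₂ ∈ LinearMap.ker (LieAlgebra.ad ℝ g x) := by
      rw [LinearMap.mem_ker, LieAlgebra.ad_apply]
      have hx2' : ⁅Y₂, x⁆ = 0 := hx2
      rw [← lie_skew, hx2', neg_zero]
    have hne : LinearMap.ker (LieAlgebra.ad ℝ g x) ≠ ⊤ := by
      intro htop
      have hzero : LieAlgebra.ad ℝ g x = 0 := LinearMap.ker_eq_top.mp htop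
      have hk : killingForm ℝ g x x = 0 := by
        have h1 : killingForm ℝ g x x =
            LinearMap.trace ℝ g (LieAlgebra.ad ℝ g x ∘ₗ LieAlgebra.ad ℝ g x) :=
          LieModule.traceForm_apply_apply ℝ g g x x
        rw [h1, hzero]
        simp
      exact absurd hk (ne_of_lt (hcompact x hx0))
    have hKmem : LinearMap.ker (LieAlgebra.ad ℝ g x) ∈ T := by
      rw [hT]
      refine Finset.mem_erase.mpr ⟨hne, ?_⟩
      rw [Set.Finite.mem_toFinset]
      exact ⟨⟨x, hx1⟩, rfl⟩
    exact hY₂ _ hKmem hYK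
  -- conclude using orthogonality
  have ho1 : (LinearMap.range (LieAlgebra.ad ℝ g Y₁))ᗮ = LinearMap.ker (LieAlgebra.ad ℝ g Y₁) :=
    skew_orthogonal_range _ (hskew Y₁)
  have ho2 : (LinearMap.range (LieAlgebra.ad ℝ g Y₂))ᗮ = LinearMap.ker (LieAlgebra.ad ℝ g Y₂) :=
    skew_orthogonal_range _ (hskew Y₂)
  have horth : (LinearMap.range (LieAlgebra.ad ℝ g Y₁) ⊔
      LinearMap.range (LieAlgebra.ad ℝ g Y₂))ᗮ = ⊥ := by
    rw [← Submodule.inf_orthogonal, ho1, ho2, hker12]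
  rwa [Submodule.orthogonal_eq_bot_iff] at horth
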